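/- Let A be a finite nonempty alphabet, d ≥ 1, and L a regular language over A. Then the Π₁-ceiling ceil_d L is Π₁_d[Reg]-definable. -/

import Mathlib

section CeilAux

variable {A : Type} {σ : Type} {d : ℕ}

def ceilDFA (M : DFA A σ) (a : Fin d → A) :
    DFA (Finset (Fin d)) (Set σ × Set (Fin d)) where
  step := fun ST s =>
    ({q' | Disjoint (↑s : Set (Fin d)) ST.2 ∧
        ∃ q ∈ ST.1, ∃ b : A, (∀ j ∈ s, a j = b) ∧ M.step q b = q'},
      ST.2 ∪ ↑s)
  start := ({M.start}, ∅)
  accept := {ST | ST.2 = Set.univ ∧ ∃ q' ∈ ST.1, q' ∈ M.accept}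

lemma ceilDFA_evalFrom (M : DFA A σ) (a : Fin d → A) (u : List (Finset (Fin d)))
    (S₀ : Set σ) (T₀ : Set (Fin d)) :
    (ceilDFA M a).evalFrom (S₀, T₀) u =
      ({q' | ∃ q₀ ∈ S₀, ∃ v : List A,
          List.Forall₂ (fun s b => ∀ j ∈ s, a j = b) u v ∧
          (∀ t ∈ u, Disjoint (↑t : Set (Fin d)) T₀) ∧
          u.Pairwise (fun s t => Disjoint s t) ∧ M.evalFrom q₀ v = q'},
        T₀ ∪ {j | ∃ s ∈ u, j ∈ s}) := by
  induction u generalizing S₀ T₀ with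
  | nil =>
    refine Prod.ext ?_ (by ext j; simp [DFA.evalFrom])
    ext q'
    simp only [Set.mem_setOf_eq, List.forall₂_nil_left_iff, DFA.evalFrom, List.foldl_nil]
    constructor
    · rintro h; exact ⟨q', h, [], rfl, by simp, by simp, rfl⟩
    · rintro ⟨q₀, hq₀, v, rfl, -, -, rfl⟩; exact hq₀
  | cons s u ih =>
    have hstep : (ceilDFA M a).evalFrom (S₀, T₀) (s :: u) =
        (ceilDFA M a).evalFrom ((ceilDFA M a).step (S₀, T₀) s) u := rfl
    rw [hstep]
    show (ceilDFA M a).evalFrom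
        ({q' | Disjoint (↑s : Set (Fin d)) T₀ ∧
          ∃ q ∈ S₀, ∃ b : A, (∀ j ∈ s, a j = b) ∧ M.step q b = q'}, T₀ ∪ ↑s) u = _
    rw [ih]
    refine Prod.ext ?_ ?_
    · ext q'
      simp only [Set.mem_setOf_eq, List.forall₂_cons_left_iff, List.pairwise_cons,
        List.mem_cons, forall_eq_or_imp]
      constructor
      · rintro ⟨q₁, ⟨hdisj, q₀, hq₀, b, hb, hstep⟩, v', h₂, hdis', hpw, hev⟩
        refine ⟨q₀, hq₀, b :: v', ⟨b, v', hb, h₂, rfl⟩, ⟨hdisj, ?_⟩, ⟨?_, hpw⟩, ?_⟩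
        · exact fun t ht => (Set.disjoint_union_right.mp (hdis' t ht)).1
        · intro t ht
          have := (Set.disjoint_union_right.mp (hdis' t ht)).2
          exact (Finset.disjoint_coe.mp this).symm
        · simpa [DFA.evalFrom, hstep] using hev
      · rintro ⟨q₀, hq₀, v, ⟨b, v', hb, h₂, rfl⟩, ⟨hds, hdis⟩, ⟨hpws, hpw⟩, hev⟩
        refine ⟨M.step q₀ b, ⟨hds, q₀, hq₀, b, hb, rfl⟩, v', h₂, ?_, hpw, ?_⟩
        · intro t ht
          refine Set.disjoint_union_right.mpr ⟨hdis t ht, ?_⟩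
          exact (Finset.disjoint_coe.mpr (hpws t ht)).symm
        · simpa [DFA.evalFrom] using hev
    · ext j
      simp only [Set.mem_union, Set.mem_setOf_eq, List.mem_cons, Finset.coe_union,
        Finset.mem_coe]
      constructor
      · rintro (⟨h | h⟩ | ⟨t, ht, hj⟩)
        · exact Or.inl h
        · exact Or.inr ⟨s, Or.inl rfl, h⟩
        · exact Or.inr ⟨t, Or.inr ht, hj⟩
      · rintro (h | ⟨t, (rfl | ht), hj⟩)
        · exact Or.inl (Or.inl h)
        · exact Or.inl (Or.inr hj)
        · exact Or.inr ⟨t, ht, hj⟩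

lemma ceilDFA_accepts (M : DFA A σ) (a : Fin d → A) (u : List (Finset (Fin d))) :
    u ∈ (ceilDFA M a).accepts ↔
      ∃ p : Fin d → Fin u.length,
        (∀ j : Fin d, ∀ q : Fin u.length, j ∈ u.get q ↔ q = p j) ∧
        ∃ v ∈ M.accepts, v.length = u.length ∧
          ∀ j : Fin d, ∀ h : (p j : ℕ) < v.length, v.get ⟨(p j : ℕ), h⟩ = a j := by
  have heval : (ceilDFA M a).eval u = (ceilDFA M a).evalFrom ({M.start}, ∅) u := rfl
  have hmem : u ∈ (ceilDFA M a).accepts ↔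
      (ceilDFA M a).eval u ∈ (ceilDFA M a).accept := Iff.rfl
  rw [hmem, heval, ceilDFA_evalFrom]
  simp only [ceilDFA, Set.mem_setOf_eq, Set.mem_singleton_iff]
  constructor
  · rintro ⟨hTuniv, q', ⟨q₀, rfl, v, hf, -, hpw, rfl⟩, hacc⟩
    have hcov : ∀ j : Fin d, ∃ q : Fin u.length, j ∈ u.get q := by
      intro j
      have : j ∈ (∅ : Set (Fin d)) ∪ {j | ∃ s ∈ u, j ∈ s} := hTuniv ▸ Set.mem_univ j
      rcases this with h | ⟨s, hs, hj⟩
      · exact absurd h (Set.notMem_empty j)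
      · obtain ⟨q, hq⟩ := List.mem_iff_get.mp hs
        exact ⟨q, hq ▸ hj⟩
    choose p hp using hcov
    have huniq : ∀ j : Fin d, ∀ q₁ q₂ : Fin u.length,
        j ∈ u.get q₁ → j ∈ u.get q₂ → q₁ = q₂ := by
      intro j q₁ q₂ h₁ h₂
      by_contra hne
      rcases lt_or_gt_of_ne hne with hlt | hlt
      · exact (Finset.disjoint_left.mp
          (List.pairwise_iff_get.mp hpw q₁ q₂ hlt) h₁) h₂
      · exact (Finset.disjoint_left.mp
          (List.pairwise_iff_get.mp hpw q₂ q₁ hlt) h₂) h₁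
    refine ⟨p, fun j q => ⟨fun h => huniq j q (p j) h (hp j), fun h => h ▸ hp j⟩,
      v, hacc, hf.length_eq.symm, fun j h => ?_⟩
    exact (hf.get (p j).isLt h j (by simpa using hp j)).symm
  · rintro ⟨p, hp, v, hv, hlen, hget⟩
    refine ⟨?_, M.eval v, ⟨M.start, rfl, v, ?_, fun t _ => Set.disjoint_empty _, ?_, rfl⟩, hv⟩
    · apply Set.eq_univ_of_forall
      intro j
      exact Or.inr ⟨u.get (p j), List.get_mem u (p j), (hp j (p j)).mpr rfl⟩
    · refine List.forall₂_of_length_eq_of_get hlen.symm ?_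
      intro i h₁ h₂ j hj
      have hq : (⟨i, h₁⟩ : Fin u.length) = p j := (hp j ⟨i, h₁⟩).mp hj
      have hi : (p j : ℕ) = i := by rw [← hq]
      have h' : (p j : ℕ) < v.length := hi ▸ h₂
      rw [show (⟨i, h₂⟩ : Fin v.length) = ⟨(p j : ℕ), h'⟩ from Fin.ext hi.symm]
      exact (hget j h').symm
    · rw [List.pairwise_iff_get]
      intro q₁ q₂ hlt
      rw [Finset.disjoint_left]
      intro j h₁ h₂
      have e₁ := (hp j q₁).mp h₁
      have e₂ := (hp j q₂).mp h₂
      exact absurd (e₁.trans e₂.symm) (ne_of_lt hlt)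

end CeilAux

def NumPredEncoding {d : ℕ} (N : (Fin d → ℕ) → ℕ → Prop) :
    Language (Finset (Fin d)) :=
  {u | ∃ p : Fin d → Fin u.length,
    (∀ j : Fin d, ∀ q : Fin u.length, j ∈ u.get q ↔ q = p j) ∧
    N (fun j => (p j : ℕ)) u.length}

def IsRegularNumPred {d : ℕ} (N : (Fin d → ℕ) → ℕ → Prop) : Prop :=
  (NumPredEncoding N).IsRegular

def Pi1RegDefinable (A : Type*) (d : ℕ) (L : Set (List A)) : Prop :=
  ∃ N : (Fin d → A) → (Fin d → ℕ) → ℕ → Prop,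
    (∀ a : Fin d → A, IsRegularNumPred (N a)) ∧
    ∀ w : List A, w ∈ L ↔ ∀ i : Fin d → Fin w.length,
      N (fun j => w.get (i j)) (fun j => (i j : ℕ)) w.length

def ceil (A : Type*) (d : ℕ) (L : Set (List A)) : Set (List A) :=
  {w | ∀ i : Fin d → Fin w.length, ∃ v ∈ L, ∃ h : v.length = w.length,
    ∀ j : Fin d, v.get (Fin.cast h.symm (i j)) = w.get (i j)}

theorem ceil_pi1_reg_definable (A : Type) [Fintype A] [Nonempty A] (d : ℕ) (hd : 1 ≤ d)
    (L : Set (List A)) (hreg : Language.IsRegular (L : Language A)) :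
    Pi1RegDefinable A d (ceil A d L) := by
  obtain ⟨σ, fσ, M, hM⟩ := hreg
  refine ⟨fun a i n => ∃ v ∈ L, v.length = n ∧
      ∀ j : Fin d, ∀ h : i j < v.length, v.get ⟨i j, h⟩ = a j, ?_, ?_⟩
  · intro a
    haveI := Classical.decEq σ
    refine ⟨Set σ × Set (Fin d), inferInstance, ceilDFA M a, ?_⟩
    ext u
    rw [ceilDFA_accepts]
    simp only [NumPredEncoding, Set.mem_setOf_eq, hM]
    rfl
  · intro w
    constructor
    · intro hw i
      obtain ⟨v, hv, h, hvw⟩ := hw i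
      refine ⟨v, hv, h, fun j hj => ?_⟩
      exact hvw j
    · intro hw i
      obtain ⟨v, hv, h, hvw⟩ := hw i
      exact ⟨v, hv, h, fun j => hvw j (lt_of_lt_of_eq (i j).isLt h.symm)⟩
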